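/- arXiv:1707.07259 — 2 statements merged into one kernel-verified Lean document; each statement's English description precedes it below -/
import Mathlib

section
/- Let F = [[0, 1/C, 0],[(k₁-1)/L, (k₂-R)/L, k₃/L],[0, -1, 0]] with C, L, R > 0, and let P = diag(η, p, (k₃/L)·p) with η > 0. If P is positive definite and Q = FᵀP + PF is negative semidefinite with Q ≠ 0, and (k₁-1)p/L = -η/C, then k₁ < 1, k₂ < R, and k₃ > 0. -/
open Matrix

theorem stmt_4 (C L R k₁ k₂ k₃ η p : ℝ)
    (hC : 0 < C) (hL : 0 < L) (hR : 0 < R) (hη : 0 < η)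
    (F : Matrix (Fin 3) (Fin 3) ℝ)
    (hF : F = !![0, 1/C, 0; (k₁-1)/L, (k₂-R)/L, k₃/L; 0, -1, 0])
    (P : Matrix (Fin 3) (Fin 3) ℝ)
    (hP : P = Matrix.diagonal ![η, p, (k₃/L) * p])
    (hPpos : P.PosDef)
    (Q : Matrix (Fin 3) (Fin 3) ℝ)
    (hQ : Q = Fᵀ * P + P * F)
    (hQnsd : ∀ x : Fin 3 → ℝ, x ⬝ᵥ Q *ᵥ x ≤ 0)
    (hQne : Q ≠ 0)
    (hrel : (k₁ - 1) * p / L = -η / C) :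
    k₁ < 1 ∧ k₂ < R ∧ 0 < k₃ := by
  rw [hP, posDef_diagonal_iff] at hPpos
  have hp : 0 < p := by simpa using hPpos 1
  have hk3L : 0 < k₃ / L * p := by simpa using hPpos 2
  have hk3 : 0 < k₃ := by
    rcases mul_pos_iff.mp hk3L with ⟨h, _⟩ | ⟨_, h2⟩
    · rcases div_pos_iff.mp h with ⟨h', _⟩ | ⟨_, h'⟩
      · exact h'
      · linarith
    · linarith
  have hk1 : k₁ < 1 := by
    have hneg : (k₁ - 1) * p / L < 0 := by
      rw [hrel]; exact div_neg_of_neg_of_pos (by linarith) hC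
    by_contra hge
    push_neg at hge
    have : 0 ≤ (k₁ - 1) * p / L :=
      div_nonneg (mul_nonneg (by linarith) hp.le) hL.le
    linarith
  have hP' : P = !![η, 0, 0; 0, p, 0; 0, 0, (k₃/L) * p] := by
    rw [hP]; ext i j
    fin_cases i <;> fin_cases j <;> simp [Matrix.diagonal, Matrix.vecHead, Matrix.vecTail]
  have hFt : Fᵀ = !![0, (k₁-1)/L, 0; 1/C, (k₂-R)/L, -1; 0, k₃/L, 0] := by
    rw [hF]; ext i j; fin_cases i <;> fin_cases j <;> rfl
  -- quadratic form at e₁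
  have hq1 := hQnsd ![0, 1, 0]
  rw [hQ, hFt, hF, hP'] at hq1
  simp [dotProduct, mulVec, Matrix.mul_apply, Fin.sum_univ_three,
    Matrix.diagonal, Matrix.add_apply] at hq1
  have hk2le : k₂ ≤ R := by
    by_contra hlt
    push_neg at hlt
    have hpos : 0 < (k₂ - R) / L * p := mul_pos (div_pos (by linarith) hL) hp
    nlinarith
  have hk2 : k₂ < R := by
    rcases lt_or_eq_of_le hk2le with h | h
    · exact h
    · exfalso
      apply hQne
      rw [hQ, hFt, hF, hP']
      have hL' : L ≠ 0 := ne_of_gt hL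
      have hC' : C ≠ 0 := ne_of_gt hC
      ext i j
      fin_cases i <;> fin_cases j <;>
        simp [Matrix.mul_apply, Fin.sum_univ_three, Matrix.add_apply, h] <;>
        field_simp at hrel ⊢ <;> linarith
  exact ⟨hk1, hk2, hk3⟩
end

section
/- Let C, L, R > 0, η > 0, p > 0, k₁ < 1, k₂ < R, k₃ > 0, with p = ηL/(C(1-k₁)). Define F = [[0, 1/C, 0],[(k₁-1)/L, (k₂-R)/L, k₃/L],[0, -1, 0]] and P = diag(η, p, (k₃/L)p). Then P is positive definite and Q = FᵀP + PF equals the matrix with single nonzero entry 2(k₂-R)p/L in position (2,2), hence Q is negative semidefinite and nonzero. -/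
open Matrix

theorem stmt_5 (C L R k₁ k₂ k₃ η p : ℝ)
    (hC : 0 < C) (hL : 0 < L) (hR : 0 < R) (hη : 0 < η) (hp : 0 < p)
    (hk₁ : k₁ < 1) (hk₂ : k₂ < R) (hk₃ : 0 < k₃)
    (hprel : p = η * L / (C * (1 - k₁)))
    (F : Matrix (Fin 3) (Fin 3) ℝ)
    (hF : F = !![0, 1/C, 0; (k₁-1)/L, (k₂-R)/L, k₃/L; 0, -1, 0])
    (P : Matrix (Fin 3) (Fin 3) ℝ)
    (hP : P = Matrix.diagonal ![η, p, (k₃/L) * p]) :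
    P.PosDef ∧
    Fᵀ * P + P * F = !![0, 0, 0; 0, 2*(k₂-R)*p/L, 0; 0, 0, 0] ∧
    (∀ x : Fin 3 → ℝ, x ⬝ᵥ (Fᵀ * P + P * F) *ᵥ x ≤ 0) ∧
    Fᵀ * P + P * F ≠ 0 := by
  have h1k : 0 < 1 - k₁ := by linarith
  have hkey : p * (k₁ - 1) * C + η * L = 0 := by
    rw [hprel]; field_simp; ring
  have hFT : Fᵀ = !![0, (k₁-1)/L, 0; 1/C, (k₂-R)/L, -1; 0, k₃/L, 0] := by
    rw [hF]; ext i j; fin_cases i <;> fin_cases j <;> rfl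
  have hP' : P = !![η, 0, 0; 0, p, 0; 0, 0, (k₃/L)*p] := by
    rw [hP]; ext i j; fin_cases i <;> fin_cases j <;> simp [Matrix.diagonal] <;> rfl
  have hQ : Fᵀ * P + P * F = !![0, 0, 0; 0, 2*(k₂-R)*p/L, 0; 0, 0, 0] := by
    rw [hFT, hP', hF]
    ext i j
    fin_cases i <;> fin_cases j <;>
      simp [Matrix.mul_apply, Fin.sum_univ_succ, Matrix.vecHead, Matrix.vecTail] <;>
      field_simp <;> (first | linear_combination hkey | linear_combination -hkey | linarith [hkey] | nlinarith [hkey])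
  refine ⟨?_, hQ, ?_, ?_⟩
  · rw [hP]
    rw [Matrix.posDef_diagonal_iff]
    intro i
    fin_cases i <;> simp <;> positivity
  · intro x
    rw [hQ]
    have : x ⬝ᵥ (!![0, 0, 0; 0, 2*(k₂-R)*p/L, 0; 0, 0, 0] : Matrix (Fin 3) (Fin 3) ℝ) *ᵥ x
        = (2*(k₂-R)*p/L) * (x 1 * x 1) := by
      simp [Matrix.mulVec, dotProduct, Fin.sum_univ_succ]
      ring
    rw [this]
    have h1 : 2*(k₂-R)*p/L ≤ 0 := by
      apply div_nonpos_of_nonpos_of_nonneg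
      · nlinarith
      · linarith
    nlinarith [mul_self_nonneg (x 1)]
  · rw [hQ]
    intro h
    have h11 : (2*(k₂-R)*p/L : ℝ) = 0 := by
      have := congrFun (congrFun h 1) 1
      simpa using this
    have hneg : 2*(k₂-R)*p/L < 0 := div_neg_of_neg_of_pos (by nlinarith) hL
    linarith
end
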